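/- Let p be a prime and m, n positive natural numbers with p^(n-1) < m ≤ p^n. Let V = Fin m → ZMod p, let A ∈ GL_m(ZMod p) be the Jordan block with eigenvalue 1 (entries 1 on the diagonal and first superdiagonal, 0 elsewhere), and let G be the semidirect product of the additive group V by the cyclic subgroup generated by A inside GL_m(ZMod p), where A acts on V by matrix-vector multiplication (the holomorph Hol(V, α)). Then G has cardinality p^(m+n). -/

import Mathlib

/-- The nilpotent upper-triangular Jordan block: entry `(i,j)` is `1` if `j = i + 1`
and `0` otherwise. -/
def jordanNilp (p m : ℕ) : Matrix (Fin m) (Fin m) (ZMod p) :=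
  Matrix.of fun i j => if (j : ℕ) = (i : ℕ) + 1 then 1 else 0

/-- The additive automorphism of `V = Fin m → ZMod p` given by right matrix-vector
multiplication (`vecMul`) by an invertible matrix `g`, i.e. `v ↦ v · g`. -/
def vecMulAut {p m : ℕ} (g : GL (Fin m) (ZMod p)) : AddAut (Fin m → ZMod p) where
  toFun v := Matrix.vecMul v (g : Matrix (Fin m) (Fin m) (ZMod p))
  invFun v := Matrix.vecMul v ((↑(g⁻¹) : Matrix (Fin m) (Fin m) (ZMod p)))
  left_inv v := by simp [Matrix.vecMul_vecMul]
  right_inv v := by simp [Matrix.vecMul_vecMul]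
  map_add' u v := Matrix.add_vecMul (g : Matrix (Fin m) (Fin m) (ZMod p)) u v

set_option maxHeartbeats 1000000 in
/-- The action of the cyclic subgroup `⟨A⟩ = Subgroup.zpowers A` on the (multiplicative
version of the) additive group `V = Fin m → ZMod p`, a matrix acting by right
matrix-vector multiplication `v ↦ v · A`. -/
def holPhi {p m : ℕ} (A : GL (Fin m) (ZMod p)) :
    ↥(Subgroup.zpowers A) →* MulAut (Multiplicative (Fin m → ZMod p)) where
  toFun g := AddEquiv.toMultiplicative (vecMulAut (g : GL (Fin m) (ZMod p)))
  map_one' := by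
    ext v
    simp [vecMulAut, AddEquiv.toMultiplicative]
  map_mul' g h := by
    rw [show g * h = h * g from (Subgroup.zpowers_isMulCommutative A).is_comm.comm g h]
    ext v
    simp [vecMulAut, AddEquiv.toMultiplicative, Matrix.vecMul_vecMul]


lemma jordanNilp_pow (p m k : ℕ) :
    (jordanNilp p m) ^ k = (Matrix.of fun i j => if (j : ℕ) = (i : ℕ) + k then 1 else 0 :
      Matrix (Fin m) (Fin m) (ZMod p)) := by
  induction k with
  | zero =>
    ext i j
    simp [Matrix.one_apply, Fin.ext_iff, eq_comm]
  | succ k ih =>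
    rw [pow_succ, ih]
    ext i j
    rw [Matrix.mul_apply]
    by_cases h : (j : ℕ) = (i : ℕ) + (k + 1)
    · have hik : (i : ℕ) + k < m := by have := j.isLt; omega
      rw [Finset.sum_eq_single (⟨(i : ℕ) + k, hik⟩ : Fin m)]
      · simp [jordanNilp, h, Matrix.of_apply]
        omega
      · intro l _ hl
        have : (l : ℕ) ≠ (i : ℕ) + k := fun hc => hl (Fin.ext hc)
        simp [jordanNilp, this]
      · simp
    · simp only [Matrix.of_apply, if_neg h]
      apply Finset.sum_eq_zero
      intro l _
      by_cases hl : (l : ℕ) = (i : ℕ) + k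
      · have : (j : ℕ) ≠ (l : ℕ) + 1 := by omega
        simp [jordanNilp, this]
      · simp [jordanNilp, hl]

lemma orderOf_jordan_block (p m n : ℕ) [Fact p.Prime]
    (hm : 0 < m) (hn : 0 < n) (h1 : p ^ (n - 1) < m) (h2 : m ≤ p ^ n)
    (A : GL (Fin m) (ZMod p))
    (hA : (A : Matrix (Fin m) (Fin m) (ZMod p)) = 1 + jordanNilp p m) : orderOf A = p ^ n := by
  have hp := (Fact.out : p.Prime)
  haveI : NeZero m := ⟨hm.ne'⟩
  set J := jordanNilp p m with hJ
  set B := (A : Matrix (Fin m) (Fin m) (ZMod p)) with hB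
  have hJm : J ^ m = 0 := by
    rw [jordanNilp_pow]
    ext i j
    simp only [Matrix.of_apply, Matrix.zero_apply]
    rw [if_neg]
    have := j.isLt
    omega
  have hpow : ∀ k : ℕ, B ^ (p ^ k) = 1 + J ^ (p ^ k) := by
    intro k
    rw [hA]
    rw [add_pow_char_pow_of_commute p k (Commute.one_left J), one_pow]
  have h1n : B ^ (p ^ n) = 1 := by
    rw [hpow, pow_eq_zero_of_le h2 hJm, add_zero]
  have hne : B ^ (p ^ (n - 1)) ≠ 1 := by
    rw [hpow]
    intro hcon
    have hz : J ^ (p ^ (n - 1)) = 0 := by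
      have := congrArg (fun x => x - 1) hcon
      simpa using this
    have := congrFun (congrFun (hz ▸ jordanNilp_pow p m (p ^ (n-1))) ⟨0, hm⟩) ⟨p ^ (n-1), h1⟩
    simp at this
  have hordB : orderOf B = p ^ n := by
    have hd : orderOf B ∣ p ^ n := orderOf_dvd_of_pow_eq_one h1n
    obtain ⟨k, hk, hke⟩ := (Nat.dvd_prime_pow hp).mp hd
    rcases Nat.lt_or_ge k n with hkn | hkn
    · exfalso
      apply hne
      apply orderOf_dvd_iff_pow_eq_one.mp
      rw [hke]
      exact pow_dvd_pow p (by omega)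
    · rw [hke]; congr 1; omega
  rw [← hordB]
  exact (orderOf_injective (Units.coeHom _) (fun a b h => Units.ext h) A).symm

theorem card_holomorph_jordan_block (p m n : ℕ) [Fact p.Prime]
    (hm : 0 < m) (hn : 0 < n) (h1 : p ^ (n - 1) < m) (h2 : m ≤ p ^ n)
    (A : GL (Fin m) (ZMod p))
    (hA : (A : Matrix (Fin m) (Fin m) (ZMod p)) = 1 + jordanNilp p m) :
    Nat.card (Multiplicative (Fin m → ZMod p) ⋊[holPhi A] ↥(Subgroup.zpowers A))
      = p ^ (m + n) := by
  rw [Nat.card_congr (⟨fun x => (x.left, x.right), fun x => ⟨x.1, x.2⟩,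
    fun x => rfl, fun x => rfl⟩ :
      _ ≃ Multiplicative (Fin m → ZMod p) × ↥(Subgroup.zpowers A)), Nat.card_prod,
    Nat.card_zpowers, orderOf_jordan_block p m n hm hn h1 h2 A hA, pow_add]
  congr 1
  simp [Nat.card_eq_fintype_card, ZMod.card]
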